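/- arXiv:2110.07810 — 2 statements merged into one kernel-verified Lean document; each statement's English description precedes it below -/
import Mathlib

section
/- For all real x, x·tanh(x) ≤ x² - x⁴/3 + 2x⁶/15. -/
open Real

private lemma nonneg_of_deriv_aux (f f' : ℝ → ℝ) (hd : ∀ x, HasDerivAt f (f' x) x)
    (h0 : f 0 = 0) (hf' : ∀ x, 0 ≤ x → 0 ≤ f' x) : ∀ x, 0 ≤ x → 0 ≤ f x := by
  intro x hx
  have hmono : MonotoneOn f (Set.Ici (0:ℝ)) := by
    apply monotoneOn_of_deriv_nonneg (convex_Ici 0)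
    · exact fun y _ => (hd y).continuousAt.continuousWithinAt
    · exact fun y _ => ((hd y).differentiableAt).differentiableWithinAt
    · intro y hy
      rw [(hd y).deriv]
      exact hf' y (le_of_lt (by simpa using hy))
  have := hmono (Set.self_mem_Ici) (Set.mem_Ici.mpr hx) hx
  rwa [h0] at this

private lemma sinh_le_mul_cosh {x : ℝ} (hx : 0 ≤ x) : Real.sinh x ≤ x * Real.cosh x := by
  have h := nonneg_of_deriv_aux (fun x => x * Real.cosh x - Real.sinh x)
    (fun x => x * Real.sinh x)
    (fun y => by
      have h := ((hasDerivAt_id y).mul (Real.hasDerivAt_cosh y)).sub (Real.hasDerivAt_sinh y)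
      convert h using 1 <;> first | rfl | (simp only [id_eq, Pi.sub_apply, Pi.add_apply, Pi.mul_apply]; ring))
    (by simp)
    (fun y hy => mul_nonneg hy (Real.sinh_nonneg_iff.mpr hy)) x hx
  have h2 : 0 ≤ x * Real.cosh x - Real.sinh x := h
  linarith

private lemma lower_bound {x : ℝ} (hx : 0 ≤ x) :
    (x - x ^ 3 / 3) * Real.cosh x ≤ Real.sinh x := by
  have h := nonneg_of_deriv_aux (fun x => Real.sinh x - (x - x ^ 3 / 3) * Real.cosh x)
    (fun x => x ^ 2 * Real.cosh x - (x - x ^ 3 / 3) * Real.sinh x)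
    (fun y => by
      have h := (Real.hasDerivAt_sinh y).sub
        ((((hasDerivAt_id y).sub (((hasDerivAt_pow 3 y)).div_const 3)).mul
          (Real.hasDerivAt_cosh y)))
      convert h using 1 <;> first | rfl | (simp only [id_eq, Pi.sub_apply, Pi.add_apply, Pi.mul_apply]; push_cast; ring))
    (by simp)
    (fun y hy => by
      show 0 ≤ y ^ 2 * Real.cosh y - (y - y ^ 3 / 3) * Real.sinh y
      have hs := Real.sinh_nonneg_iff.mpr hy
      have hc := (Real.cosh_pos (x := y)).le
      rcases le_or_gt (y - y ^ 3 / 3) 0 with h | h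
      · nlinarith
      · have := sinh_le_mul_cosh hy
        nlinarith [mul_le_mul_of_nonneg_left this h.le,
          mul_nonneg (mul_nonneg hy (mul_nonneg hy (mul_nonneg hy hy))) hc]) x hx
  have h2 : 0 ≤ Real.sinh x - (x - x ^ 3 / 3) * Real.cosh x := h
  linarith

private lemma upper_bound {x : ℝ} (hx : 0 ≤ x) :
    Real.sinh x ≤ (x - x ^ 3 / 3 + 2 * x ^ 5 / 15) * Real.cosh x := by
  have h := nonneg_of_deriv_aux
    (fun x => (x - x ^ 3 / 3 + 2 * x ^ 5 / 15) * Real.cosh x - Real.sinh x)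
    (fun x => (x - x ^ 3 / 3 + 2 * x ^ 5 / 15) * Real.sinh x - (x ^ 2 - 2 * x ^ 4 / 3) * Real.cosh x)
    (fun y => by
      have h := ((((hasDerivAt_id y).sub ((hasDerivAt_pow 3 y).div_const 3)).add
        (((hasDerivAt_pow 5 y).const_mul 2).div_const 15)).mul
          (Real.hasDerivAt_cosh y)).sub (Real.hasDerivAt_sinh y)
      convert h using 1 <;> first | rfl | (simp only [id_eq, Pi.sub_apply, Pi.add_apply, Pi.mul_apply]; push_cast; ring))
    (by simp)
    (fun y hy => by
      show 0 ≤ (y - y ^ 3 / 3 + 2 * y ^ 5 / 15) * Real.sinh y - (y ^ 2 - 2 * y ^ 4 / 3) * Real.cosh y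
      have hs := Real.sinh_nonneg_iff.mpr hy
      have hc := (Real.cosh_pos (x := y)).le
      have hp : 0 ≤ y - y ^ 3 / 3 + 2 * y ^ 5 / 15 := by
        nlinarith [sq_nonneg (y ^ 2 - 1), sq_nonneg y, sq_nonneg (y * (y ^ 2 - 1))]
      rcases le_or_gt (y - y ^ 3 / 3) 0 with h | h
      · rcases eq_or_lt_of_le hy with rfl | hy'
        · simp
        · have hy3 : 3 ≤ y ^ 2 := by nlinarith
          have hneg : y ^ 2 - 2 * y ^ 4 / 3 ≤ 0 := by nlinarith
          nlinarith [mul_nonneg hp hs, mul_nonpos_of_nonpos_of_nonneg hneg hc]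
      · have hlb := lower_bound hy
        have hy0 : 0 < y := by
          rcases eq_or_lt_of_le hy with rfl | hy' <;> [simp at h; exact hy']
        have hy3 : y ^ 2 < 3 := by nlinarith
        nlinarith [mul_le_mul_of_nonneg_left hlb hp,
          mul_nonneg hc (mul_nonneg (pow_nonneg hy 6)
            (by linarith : (0:ℝ) ≤ 11 - 2 * y ^ 2))]) x hx
  have h2 : 0 ≤ (x - x ^ 3 / 3 + 2 * x ^ 5 / 15) * Real.cosh x - Real.sinh x := h
  linarith

theorem mul_tanh_le (x : ℝ) :
    x * Real.tanh x ≤ x ^ 2 - x ^ 4 / 3 + 2 * x ^ 6 / 15 := by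
  have key : ∀ y : ℝ, 0 ≤ y → y * Real.tanh y ≤ y ^ 2 - y ^ 4 / 3 + 2 * y ^ 6 / 15 := by
    intro y hy
    have hc := Real.cosh_pos (x := y)
    have h := upper_bound hy
    have ht : Real.tanh y ≤ y - y ^ 3 / 3 + 2 * y ^ 5 / 15 := by
      rw [Real.tanh_eq_sinh_div_cosh, div_le_iff₀ hc]
      linarith
    nlinarith [mul_le_mul_of_nonneg_left ht hy]
  rcases le_or_gt 0 x with hx | hx
  · exact key x hx
  · have h := key (-x) (by linarith)
    rw [Real.tanh_neg] at h
    nlinarith [h]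
end

section
/- Let f : ℝ^d → ℝ be convex and differentiable with minimizer θ*, and suppose on a ball B(θ*, ρ) there exist constants c₁, c₂ > 0 and α ≥ 0 such that (i) f(θ) - f(θ*) ≥ ‖∇f(θ)‖²/(2c₁‖θ - θ*‖^α) and (ii) ‖θ - θ*‖ ≤ ((α+2)/c₂)·(f(θ) - f(θ*))^{1/(α+2)} for all θ ∈ B(θ*, ρ) with θ ≠ θ*. Then for all such θ the Polyak operator F(θ) = θ - ((f(θ) - f(θ*))/‖∇f(θ)‖²)·∇f(θ) satisfies ‖F(θ) - θ*‖ ≤ κ‖θ - θ*‖ with κ = (1 - c₂^{α+2}/(2c₁(α+2)^{α+2}))^{1/2}. -/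
open Real

lemma grad_convex_ineq {d : ℕ} (f : EuclideanSpace ℝ (Fin d) → ℝ)
    (hconv : ConvexOn ℝ Set.univ f)
    {x y gx : EuclideanSpace ℝ (Fin d)} (hg : HasGradientAt f gx x) :
    (inner ℝ gx (y - x) : ℝ) ≤ f y - f x := by
  set v := y - x with hv
  have hline : HasDerivAt (fun t : ℝ => x + t • v) v 0 := by
    simpa using ((hasDerivAt_id (0:ℝ)).smul_const v).const_add x
  have hφ : HasDerivAt (fun t : ℝ => f (x + t • v)) (inner ℝ gx v : ℝ) 0 := by
    have hfd : HasFDerivAt f ((InnerProductSpace.toDual ℝ _) gx) (x + (0:ℝ) • v) := by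
      simpa using hg.hasFDerivAt
    have := hfd.comp_hasDerivAt 0 hline
    exact this
  have hslope : Filter.Tendsto (slope (fun t : ℝ => f (x + t • v)) 0)
      (nhdsWithin 0 {(0:ℝ)}ᶜ) (nhds (inner ℝ gx v : ℝ)) :=
    hasDerivAt_iff_tendsto_slope.mp hφ
  have hslope' := hslope.mono_left (nhdsWithin_mono 0
    (fun t (ht : t ∈ Set.Ioi (0:ℝ)) => (Set.mem_compl_singleton_iff).mpr (ne_of_gt ht)))
  refine le_of_tendsto hslope' ?_
  filter_upwards [Ioc_mem_nhdsGT_of_mem (Set.mem_Ico.mpr ⟨le_refl (0:ℝ), one_pos⟩)] with t ht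
  obtain ⟨ht0, ht1⟩ := ht
  have hcvx := hconv.2 (Set.mem_univ x) (Set.mem_univ y) (by linarith : (0:ℝ) ≤ 1 - t)
    (le_of_lt ht0) (by ring)
  have hxy : (1 - t) • x + t • y = x + t • v := by
    simp [hv, smul_sub, sub_smul]; abel
  rw [hxy] at hcvx
  rw [slope_def_field]
  simp only [zero_smul, add_zero, sub_zero]
  rw [div_le_iff₀ ht0]
  simp only [smul_eq_mul] at hcvx
  nlinarith

theorem polyak_population_contraction
    {d : ℕ} (f : EuclideanSpace ℝ (Fin d) → ℝ)
    (g : EuclideanSpace ℝ (Fin d) → EuclideanSpace ℝ (Fin d))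
    (hconv : ConvexOn ℝ Set.univ f)
    (hgrad : ∀ x, HasGradientAt f (g x) x)
    (θstar : EuclideanSpace ℝ (Fin d)) (hmin : ∀ z, f θstar ≤ f z)
    (ρ c₁ c₂ α : ℝ) (hρ : 0 < ρ) (hc₁ : 0 < c₁) (hc₂ : 0 < c₂) (hα : 0 ≤ α)
    (hsmooth : ∀ θ ∈ Metric.ball θstar ρ, θ ≠ θstar →
      f θ - f θstar ≥ ‖g θ‖ ^ 2 / (2 * c₁ * ‖θ - θstar‖ ^ α))
    (hloja : ∀ θ ∈ Metric.ball θstar ρ, θ ≠ θstar →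
      ‖θ - θstar‖ ≤ ((α + 2) / c₂) * (f θ - f θstar) ^ (1 / (α + 2))) :
    ∀ θ ∈ Metric.ball θstar ρ, θ ≠ θstar →
      ‖(θ - ((f θ - f θstar) / ‖g θ‖ ^ 2) • g θ) - θstar‖
        ≤ Real.sqrt (1 - c₂ ^ (α + 2) / (2 * c₁ * (α + 2) ^ (α + 2))) * ‖θ - θstar‖ := by
  intro θ hθ hne
  set r : ℝ := ‖θ - θstar‖ with hr_def
  set Δ : ℝ := f θ - f θstar with hΔ_def
  set G : ℝ := ‖g θ‖ with hG_def
  have hα2 : (0:ℝ) < α + 2 := by linarith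
  have hr : 0 < r := by
    rw [hr_def]; exact norm_pos_iff.mpr (sub_ne_zero.mpr hne)
  have hΔ0 : 0 ≤ Δ := by have := hmin θ; rw [hΔ_def]; linarith
  have hΔ : 0 < Δ := by
    rcases lt_or_eq_of_le hΔ0 with h | h
    · exact h
    · exfalso
      have hlj := hloja θ hθ hne
      have h0 : f θ - f θstar = 0 := by rw [← hΔ_def, ← h]
      rw [h0, Real.zero_rpow (by positivity : 1 / (α + 2) ≠ 0), mul_zero] at hlj
      rw [hr_def] at hr
      linarith
  have hG : 0 < G := by
    rw [hG_def]
    rcases eq_or_ne (g θ) 0 with h | h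
    · exfalso
      have hci := grad_convex_ineq f hconv (x := θ) (y := θstar) (hgrad θ)
      rw [h, inner_zero_left] at hci
      rw [hΔ_def] at hΔ; linarith
    · exact norm_pos_iff.mpr h
  have hG2 : (0:ℝ) < G ^ 2 := by positivity
  set t : ℝ := Δ / G ^ 2 with ht_def
  have ht0 : 0 ≤ t := by positivity
  -- convexity inner product bound
  have hkey : Δ ≤ inner ℝ (g θ) (θ - θstar) := by
    have hci := grad_convex_ineq f hconv (x := θ) (y := θstar) (hgrad θ)
    have : (inner ℝ (g θ) (θ - θstar) : ℝ) = - inner ℝ (g θ) (θstar - θ) := by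
      rw [← inner_neg_right, neg_sub]
    rw [this, hΔ_def]; linarith
  -- norm squared expansion
  have hrw : (θ - ((f θ - f θstar) / ‖g θ‖ ^ 2) • g θ) - θstar
      = (θ - θstar) - t • g θ := by
    rw [ht_def, hΔ_def, hG_def]; abel
  have hsq : ‖(θ - θstar) - t • g θ‖ ^ 2
      = r ^ 2 - 2 * t * inner ℝ (g θ) (θ - θstar) + t ^ 2 * G ^ 2 := by
    rw [norm_sub_sq_real, real_inner_smul_right, norm_smul, Real.norm_eq_abs,
      abs_of_nonneg ht0, mul_pow, real_inner_comm]
    ring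
  have htG : t * G ^ 2 = Δ := by
    rw [ht_def]; field_simp
  have hbound1 : ‖(θ - θstar) - t • g θ‖ ^ 2 ≤ r ^ 2 - Δ ^ 2 / G ^ 2 := by
    rw [hsq]
    have h1 : t ^ 2 * G ^ 2 = t * Δ := by rw [sq t, mul_assoc, htG]
    have h2 : t * Δ = Δ ^ 2 / G ^ 2 := by rw [ht_def]; field_simp
    nlinarith [mul_le_mul_of_nonneg_left hkey ht0]
  -- smoothness: Δ²/G² ≥ Δ/(2c₁ r^α)
  have hrα : (0:ℝ) < r ^ α := Real.rpow_pos_of_pos hr α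
  have hsm := hsmooth θ hθ hne
  have hG2le : G ^ 2 ≤ 2 * c₁ * r ^ α * Δ := by
    rw [ge_iff_le, div_le_iff₀ (by positivity)] at hsm
    rw [hΔ_def]; linarith
  have hstep1 : Δ / (2 * c₁ * r ^ α) ≤ Δ ^ 2 / G ^ 2 := by
    rw [div_le_div_iff₀ (by positivity) hG2]
    nlinarith
  -- Łojasiewicz: Δ ≥ (c₂ r / (α+2))^(α+2)
  have hlj := hloja θ hθ hne
  have hlj' : c₂ * r / (α + 2) ≤ Δ ^ (1 / (α + 2)) := by
    rw [div_le_iff₀ hα2]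
    have h := mul_le_mul_of_nonneg_left hlj (le_of_lt hc₂)
    rw [hΔ_def]
    calc c₂ * r ≤ c₂ * ((α + 2) / c₂ * Δ ^ (1 / (α + 2))) := h
      _ = Δ ^ (1 / (α + 2)) * (α + 2) := by field_simp
  have hΔge : (c₂ * r / (α + 2)) ^ (α + 2) ≤ Δ := by
    have h := Real.rpow_le_rpow (by positivity) hlj' (le_of_lt hα2)
    rwa [← Real.rpow_mul hΔ0, one_div_mul_cancel (ne_of_gt hα2), Real.rpow_one] at h
  have hrα2 : r ^ (α + 2) = r ^ α * r ^ 2 := by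
    rw [Real.rpow_add hr, Real.rpow_two, sq]
  have hlhs : (c₂ * r / (α + 2)) ^ (α + 2)
      = c₂ ^ (α + 2) * (r ^ α * r ^ 2) / (α + 2) ^ (α + 2) := by
    rw [Real.div_rpow (by positivity) (le_of_lt hα2),
      Real.mul_rpow (le_of_lt hc₂) hr.le, hrα2]
  set K : ℝ := c₂ ^ (α + 2) / (2 * c₁ * (α + 2) ^ (α + 2)) with hK_def
  have hα2p : (0:ℝ) < (α + 2) ^ (α + 2) := Real.rpow_pos_of_pos hα2 _
  have hstep2 : K * r ^ 2 ≤ Δ / (2 * c₁ * r ^ α) := by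
    rw [le_div_iff₀ (by positivity)]
    calc K * r ^ 2 * (2 * c₁ * r ^ α)
        = c₂ ^ (α + 2) * (r ^ α * r ^ 2) / (α + 2) ^ (α + 2) := by
          rw [hK_def]; field_simp
      _ = (c₂ * r / (α + 2)) ^ (α + 2) := hlhs.symm
      _ ≤ Δ := hΔge
  have hfinal : ‖(θ - θstar) - t • g θ‖ ^ 2 ≤ (1 - K) * r ^ 2 := by
    linarith
  have hprod : 0 ≤ (1 - K) * r ^ 2 := le_trans (sq_nonneg _) hfinal
  have hKle : 0 ≤ 1 - K :=
    (mul_nonneg_iff_of_pos_right (by positivity : (0:ℝ) < r ^ 2)).mp hprod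
  rw [hrw]
  have h1 : ‖(θ - θstar) - t • g θ‖ = Real.sqrt (‖(θ - θstar) - t • g θ‖ ^ 2) :=
    (Real.sqrt_sq (norm_nonneg _)).symm
  rw [h1, hK_def] at *
  calc Real.sqrt (‖(θ - θstar) - t • g θ‖ ^ 2)
      ≤ Real.sqrt ((1 - c₂ ^ (α + 2) / (2 * c₁ * (α + 2) ^ (α + 2))) * r ^ 2) :=
        Real.sqrt_le_sqrt hfinal
    _ = Real.sqrt (1 - c₂ ^ (α + 2) / (2 * c₁ * (α + 2) ^ (α + 2))) * r := by
        rw [Real.sqrt_mul hKle, Real.sqrt_sq hr.le]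
end
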